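/- Let S ∈ R^{n×n} (n ≥ 2) have unit columns with pairwise inner products all equal to α ∈ (0,1). Let s'_1, ..., s'_n be the rows of S^{−1}. Then for every i, ‖s'_i‖ = √k where k = (1+(n−2)α)/((1−α)(1+(n−1)α)), and for all i ≠ j, ⟨s'_i, s'_j⟩/(‖s'_i‖‖s'_j‖) = −α/(1+(n−2)α). In particular the rows of S^{−1} are equiangular with an obtuse common angle. -/

import Mathlib

open Matrix

theorem inverse_rows_equiangular (n : ℕ) (hn : 2 ≤ n) (α : ℝ) (hα0 : 0 < α) (hα1 : α < 1)
    (S : Matrix (Fin n) (Fin n) ℝ)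
    (hunit : ∀ j, ∑ i, S i j * S i j = 1)
    (hang : ∀ j j', j ≠ j' → ∑ i, S i j * S i j' = α)
    (k : ℝ)
    (hk : k = (1 + ((n : ℝ) - 2) * α) / ((1 - α) * (1 + ((n : ℝ) - 1) * α))) :
    (∀ i, Real.sqrt (∑ j, S⁻¹ i j * S⁻¹ i j) = Real.sqrt k) ∧
    (∀ i i', i ≠ i' →
      (∑ j, S⁻¹ i j * S⁻¹ i' j) /
        (Real.sqrt (∑ j, S⁻¹ i j * S⁻¹ i j) * Real.sqrt (∑ j, S⁻¹ i' j * S⁻¹ i' j)) =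
      -α / (1 + ((n : ℝ) - 2) * α)) := by
  have hcast : (2:ℝ) ≤ (n:ℝ) := by exact_mod_cast hn
  have h1α : (0:ℝ) < 1 - α := by linarith
  have hn1 : (0:ℝ) < 1 + ((n:ℝ) - 1) * α := by nlinarith
  have hn2 : (0:ℝ) < 1 + ((n:ℝ) - 2) * α := by nlinarith
  set a : ℝ := 1 / (1 - α) with ha
  set b : ℝ := -α / ((1 - α) * (1 + ((n:ℝ) - 1) * α)) with hb
  set H : Matrix (Fin n) (Fin n) ℝ :=
    Matrix.of (fun i j => (if i = j then a else 0) + b) with hH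
  set G : Matrix (Fin n) (Fin n) ℝ :=
    Matrix.of (fun i j => (if i = j then (1 - α) else 0) + α) with hG
  have hStS : Sᵀ * S = G := by
    ext i j
    simp only [Matrix.mul_apply, Matrix.transpose_apply, hG, Matrix.of_apply]
    by_cases h : i = j
    · subst h; simp [hunit i]
    · rw [hang i j h]; simp [h]
  have hGH : G * H = 1 := by
    ext i j
    simp only [Matrix.mul_apply, hG, hH, Matrix.of_apply, Matrix.one_apply, add_mul,
      mul_add, ite_mul, mul_ite, zero_mul, mul_zero, Finset.sum_add_distrib,
      Finset.sum_ite_eq, Finset.sum_ite_eq', Finset.mem_univ, if_true,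
      Finset.sum_const, Finset.card_univ, Fintype.card_fin, nsmul_eq_mul]
    by_cases h : i = j
    · subst h; simp only [if_true]
      rw [ha, hb]
      have e1 := mul_one_div_cancel h1α.ne'
      have e2 := mul_one_div_cancel (mul_pos h1α hn1).ne'
      linear_combination (1 + α * (1 / ((1 - α) * (1 + ((n:ℝ) - 1) * α))) * (1 + ((n:ℝ) - 1) * α)) * e1 - α * (1 / (1 - α)) * e2
    · simp only [h, if_false]
      rw [ha, hb]
      have e1 := mul_one_div_cancel h1α.ne'
      have e2 := mul_one_div_cancel (mul_pos h1α hn1).ne'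
      linear_combination α * (1 / ((1 - α) * (1 + ((n:ℝ) - 1) * α))) * (1 + ((n:ℝ) - 1) * α) * e1 - α * (1 / (1 - α)) * e2
  have hGunit : IsUnit G.det := by
    apply Matrix.isUnit_det_of_right_inverse hGH
  have hSdet : IsUnit S.det := by
    have hdet : G.det = S.det * S.det := by
      rw [← hStS, Matrix.det_mul, Matrix.det_transpose]
    rw [hdet] at hGunit
    exact isUnit_of_mul_isUnit_left hGunit
  have hinv : S⁻¹ * (S⁻¹)ᵀ = H := by
    rw [Matrix.transpose_nonsing_inv, ← Matrix.mul_inv_rev, hStS,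
      Matrix.inv_eq_right_inv hGH]
  have hsum : ∀ i i', ∑ j, S⁻¹ i j * S⁻¹ i' j = H i i' := by
    intro i i'
    rw [← hinv]
    simp [Matrix.mul_apply, Matrix.transpose_apply]
  have hdiag : ∀ i, ∑ j, S⁻¹ i j * S⁻¹ i j = k := by
    intro i
    rw [hsum i i, hH]
    simp only [Matrix.of_apply, if_pos rfl, if_true]
    rw [ha, hb, hk]
    rw [div_add_div _ _ h1α.ne' (mul_pos h1α hn1).ne', div_eq_div_iff (mul_pos h1α (mul_pos h1α hn1)).ne' (mul_pos h1α hn1).ne']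
    ring
  have hkpos : 0 < k := by
    rw [hk]
    positivity
  refine ⟨fun i => by rw [hdiag i], fun i i' hii => ?_⟩
  rw [hsum i i', hdiag i, hdiag i', Real.mul_self_sqrt hkpos.le, hH]
  simp only [Matrix.of_apply, if_neg hii, zero_add]
  rw [hb, hk]
  rw [div_div_div_cancel_right₀ (mul_pos h1α hn1).ne']
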